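/- There exists a constant c > 0, depending only on n, Q and B, such that for every pair (x,u) ∈ G and every t with 0 < t ≤ 1: c·(1 + |x|)^{-2} ≤ t²·|x|² + |u − D_t x|². -/

import Mathlib

set_option maxHeartbeats 2000000
set_option synthInstance.maxHeartbeats 1000000


open MeasureTheory Matrix Real
open scoped ENNReal RealInnerProductSpace

noncomputable section

/-- Euclidean space `ℝⁿ`. -/
abbrev Vec (n : ℕ) := EuclideanSpace ℝ (Fin n)

/-- The matrix exponential `e^A`. -/
noncomputable def mExp {n : ℕ} (A : Matrix (Fin n) (Fin n) ℝ) : Matrix (Fin n) (Fin n) ℝ :=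
  NormedSpace.exp A

/-- All complex eigenvalues of `B` have negative real part. -/
def SpecNeg {n : ℕ} (B : Matrix (Fin n) (Fin n) ℝ) : Prop :=
  ∀ μ ∈ spectrum ℂ (B.map (Complex.ofReal : ℝ → ℂ)), μ.re < 0

/-- `Q_t = ∫₀ᵗ e^{sB} Q e^{sB*} ds`, defined entrywise. -/
noncomputable def Qt {n : ℕ} (Q B : Matrix (Fin n) (Fin n) ℝ) (t : ℝ) :
    Matrix (Fin n) (Fin n) ℝ :=
  Matrix.of fun i j => ∫ s in (0:ℝ)..t, (mExp (s • B) * Q * (mExp (s • B))ᵀ) i j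

/-- `Q_∞ = ∫₀^∞ e^{sB} Q e^{sB*} ds`, defined entrywise. -/
noncomputable def Qinf {n : ℕ} (Q B : Matrix (Fin n) (Fin n) ℝ) : Matrix (Fin n) (Fin n) ℝ :=
  Matrix.of fun i j => ∫ s in Set.Ioi (0:ℝ), (mExp (s • B) * Q * (mExp (s • B))ᵀ) i j

/-- Application of a matrix to a vector in Euclidean space. -/
noncomputable def app {n : ℕ} (A : Matrix (Fin n) (Fin n) ℝ) (x : Vec n) : Vec n :=
  Matrix.toEuclideanLin A x

/-- The Gaussian measure with covariance matrix `M`. -/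
noncomputable def gaussianOf {n : ℕ} (M : Matrix (Fin n) (Fin n) ℝ) : Measure (Vec n) :=
  volume.withDensity fun y =>
    ENNReal.ofReal ((2 * π) ^ (-(n : ℝ) / 2) * M.det ^ (-(1 : ℝ) / 2) *
      Real.exp (-(1 / 2) * ⟪app M⁻¹ y, y⟫))

/-- The Ornstein--Uhlenbeck semigroup `H_t`. -/
noncomputable def OU {n : ℕ} (Q B : Matrix (Fin n) (Fin n) ℝ) (t : ℝ) (f : Vec n → ℝ)
    (x : Vec n) : ℝ :=
  ∫ y, f (app (mExp (t • B)) x - y) ∂(gaussianOf (Qt Q B t))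

/-- `D_t = Q_∞ e^{-tB*} Q_∞^{-1}`. -/
noncomputable def Dm {n : ℕ} (Q B : Matrix (Fin n) (Fin n) ℝ) (t : ℝ) :
    Matrix (Fin n) (Fin n) ℝ :=
  Qinf Q B * mExp ((-t) • Bᵀ) * (Qinf Q B)⁻¹

/-- The quadratic form `R(x) = ½⟨Q_∞^{-1}x, x⟩`. -/
noncomputable def Rq {n : ℕ} (Q B : Matrix (Fin n) (Fin n) ℝ) (x : Vec n) : ℝ :=
  (1 / 2) * ⟪app (Qinf Q B)⁻¹ x, x⟫

/-- The Mehler kernel `K_t(x,u)`. -/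
noncomputable def Mehler {n : ℕ} (Q B : Matrix (Fin n) (Fin n) ℝ) (t : ℝ) (x u : Vec n) : ℝ :=
  Real.sqrt ((Qinf Q B).det / (Qt Q B t).det) * Real.exp (Rq Q B x) *
    Real.exp (-(1 / 2) *
      ⟪app ((Qt Q B t)⁻¹ - (Qinf Q B)⁻¹) (u - app (Dm Q B t) x), u - app (Dm Q B t) x⟫)

/-- Operator norm of a matrix acting on Euclidean space. -/
noncomputable def opN {n : ℕ} (A : Matrix (Fin n) (Fin n) ℝ) : ℝ :=
  ‖Matrix.toEuclideanCLM (𝕜 := ℝ) A‖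



-- ===================== auxiliary lemmas =====================
section AuxStmt17

open NormedSpace

set_option maxHeartbeats 1000000
set_option synthInstance.maxHeartbeats 400000
set_option linter.unusedSectionVars false

section BanachExpAux
variable {𝕂 : Type*} {𝔸 : Type*} [RCLike 𝕂] [NormedRing 𝔸] [NormOneClass 𝔸]
  [NormedAlgebra 𝕂 𝔸] [CompleteSpace 𝔸]

theorem myNorm_exp_le {𝕂 : Type*} [RCLike 𝕂] [NormedAlgebra 𝕂 𝔸] (c : 𝔸) : ‖NormedSpace.exp c‖ ≤ Real.exp ‖c‖ := by
  rw [NormedSpace.exp_eq_tsum 𝕂]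
  refine (norm_tsum_le_tsum_norm (NormedSpace.norm_expSeries_summable' (𝕂 := 𝕂) c)).trans ?_
  rw [Real.exp_eq_exp_ℝ, NormedSpace.exp_eq_tsum_div]
  refine Summable.tsum_le_tsum (fun n => ?_) (NormedSpace.norm_expSeries_summable' (𝕂 := 𝕂) c) ?_
  · rw [norm_smul, norm_inv, RCLike.norm_natCast, div_eq_inv_mul]
    exact mul_le_mul le_rfl (norm_pow_le c n) (norm_nonneg _) (by positivity)
  · exact Real.summable_pow_div_factorial _

theorem myNorm_exp_sub_one_le (c : 𝔸) [NormedAlgebra ℝ 𝔸] :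
    ‖NormedSpace.exp c - 1‖ ≤ ‖c‖ * Real.exp ‖c‖ := by
  have hs : Summable fun n : ℕ => (n.factorial : ℝ)⁻¹ • c ^ n :=
    NormedSpace.expSeries_summable' (𝕂 := ℝ) c
  have hsn : Summable fun n : ℕ => ‖((n + 1).factorial : ℝ)⁻¹ • c ^ (n + 1)‖ :=
    (NormedSpace.norm_expSeries_summable' (𝕂 := ℝ) c).comp_injective (add_left_injective 1)
  have h0 : NormedSpace.exp c = ∑' (n : ℕ), (n.factorial : ℝ)⁻¹ • c ^ n :=
    congrFun (NormedSpace.exp_eq_tsum ℝ) c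
  rw [h0, Summable.tsum_eq_zero_add hs]
  simp only [Nat.factorial_zero, Nat.cast_one, inv_one, pow_zero, one_smul, add_sub_cancel_left]
  refine (norm_tsum_le_tsum_norm hsn).trans ?_
  have h2 : Summable fun n : ℕ => ‖c‖ * (‖c‖ ^ n / n.factorial) :=
    (Real.summable_pow_div_factorial _).mul_left _
  refine le_trans (Summable.tsum_le_tsum (fun n => ?_) hsn h2) ?_
  · rw [norm_smul, norm_inv, Real.norm_natCast]
    calc ((n + 1).factorial : ℝ)⁻¹ * ‖c ^ (n + 1)‖
        ≤ ((n + 1).factorial : ℝ)⁻¹ * ‖c‖ ^ (n + 1) :=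
          mul_le_mul le_rfl (norm_pow_le c (n + 1)) (norm_nonneg _) (by positivity)
      _ ≤ (n.factorial : ℝ)⁻¹ * ‖c‖ ^ (n + 1) := by
          refine mul_le_mul ?_ le_rfl (by positivity) (by positivity)
          exact inv_anti₀ (by positivity)
            (by exact_mod_cast Nat.factorial_le (Nat.le_succ n))
      _ = ‖c‖ * (‖c‖ ^ n / n.factorial) := by ring
  · rw [tsum_mul_left, Real.exp_eq_exp_ℝ, NormedSpace.exp_eq_tsum_div]
end BanachExpAux

section SpecAux
variable {V : Type*} [NormedAddCommGroup V] [NormedSpace ℂ V] [CompleteSpace V]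

theorem myExp_apply_eigen (T : V →L[ℂ] V) (lam : ℂ) (w : V) (hw : T w = lam • w) :
    NormedSpace.exp T w = Complex.exp lam • w := by
  have hsum : Summable fun n : ℕ => (n.factorial : ℂ)⁻¹ • T ^ n :=
    NormedSpace.expSeries_summable' (𝕂 := ℂ) T
  have h0 : NormedSpace.exp T = ∑' (n : ℕ), (n.factorial : ℂ)⁻¹ • T ^ n :=
    congrFun (NormedSpace.exp_eq_tsum ℂ) T
  have hpow : ∀ n : ℕ, (T ^ n) w = lam ^ n • w := by
    intro n
    induction n with
    | zero => simp
    | succ n ih =>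
      rw [pow_succ, pow_succ]
      simp only [ContinuousLinearMap.mul_apply]
      rw [hw, _root_.map_smul, ih, smul_smul, mul_comm]
  have htsum := (ContinuousLinearMap.apply ℂ V w).map_tsum hsum
  simp only [ContinuousLinearMap.apply_apply] at htsum
  rw [h0, htsum]
  simp only [ContinuousLinearMap.coe_smul', Pi.smul_apply, hpow]
  rw [Complex.exp_eq_exp_ℂ]
  have h1 : NormedSpace.exp lam = ∑' (n : ℕ), (n.factorial : ℂ)⁻¹ • lam ^ n :=
    congrFun (NormedSpace.exp_eq_tsum ℂ) lam
  rw [h1, ← Summable.tsum_smul_const]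
  · simp [smul_smul]
  · exact NormedSpace.expSeries_summable' (𝕂 := ℂ) lam

variable [FiniteDimensional ℂ V]

theorem myIsUnit_of_injective {T : V →L[ℂ] V} (h : Function.Injective T) : IsUnit T := by
  have hbij : Function.Bijective (T : V →ₗ[ℂ] V) :=
    ⟨h, (LinearMap.injective_iff_surjective (f := (T : V →ₗ[ℂ] V))).mp h⟩
  let e := LinearEquiv.ofBijective (T : V →ₗ[ℂ] V) hbij
  let ec := e.toContinuousLinearEquiv
  refine ⟨⟨T, (ec.symm : V →L[ℂ] V), ?_, ?_⟩, rfl⟩ <;>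
  · ext v
    simp [ec, e]
    first
    | exact e.apply_symm_apply v
    | exact e.symm_apply_apply v

theorem mySpectrum_exp (T : V →L[ℂ] V) (μ : ℂ) (hμ : μ ∈ spectrum ℂ (NormedSpace.exp T)) :
    ∃ lam ∈ spectrum ℂ T, μ = Complex.exp lam := by
  have hni : ¬ Function.Injective (NormedSpace.exp T - algebraMap ℂ (V →L[ℂ] V) μ) := by
    intro hinj
    have := myIsUnit_of_injective hinj
    rw [spectrum.mem_iff] at hμ
    exact hμ (by simpa using this.neg)
  set S : V →L[ℂ] V := NormedSpace.exp T - algebraMap ℂ (V →L[ℂ] V) μ with hS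
  set W : Submodule ℂ V := LinearMap.ker (S : V →ₗ[ℂ] V) with hW
  have hWne : ∃ w : V, w ∈ W ∧ w ≠ 0 := by
    rw [Function.not_injective_iff] at hni
    obtain ⟨a, b, hab, hne⟩ := hni
    exact ⟨a - b, by simp [hW, LinearMap.mem_ker, map_sub, hab], sub_ne_zero.mpr hne⟩
  haveI : Nontrivial W := by
    obtain ⟨w, hw, hne⟩ := hWne
    exact ⟨⟨w, hw⟩, 0, by simpa using hne⟩
  have hTW : ∀ v ∈ W, T v ∈ W := by
    intro v hv
    have hcomm : Commute T (NormedSpace.exp T) := (Commute.refl T).exp_right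
    simp only [hW, LinearMap.mem_ker] at hv ⊢
    have hce : (NormedSpace.exp T) (T v) = T ((NormedSpace.exp T) v) := by
      calc (NormedSpace.exp T) (T v) = (NormedSpace.exp T * T) v := rfl
        _ = (T * NormedSpace.exp T) v := by rw [← hcomm.eq]
        _ = T ((NormedSpace.exp T) v) := rfl
    have : S (T v) = T (S v) := by
      simp only [hS, ContinuousLinearMap.sub_apply, Algebra.algebraMap_eq_smul_one,
        ContinuousLinearMap.smul_apply, ContinuousLinearMap.one_apply, _root_.map_sub, _root_.map_smul, hce]
    rw [ContinuousLinearMap.coe_coe] at hv ⊢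
    rw [this, show S v = 0 from hv, map_zero]
  let f : Module.End ℂ W := (T : V →ₗ[ℂ] V).restrict hTW
  obtain ⟨lam, hlam⟩ := Module.End.exists_eigenvalue f
  obtain ⟨w, hwe⟩ := hlam.exists_hasEigenvector
  have hTw : T (w : V) = lam • (w : V) := by
    have h := hwe.apply_eq_smul
    have h2 := congrArg (Subtype.val) h
    simpa [f, LinearMap.restrict_apply] using h2
  have hwne : (w : V) ≠ 0 := fun h => hwe.right (by exact_mod_cast Subtype.ext h)
  refine ⟨lam, ?_, ?_⟩
  · rw [spectrum.mem_iff]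
    intro hun
    have hinj : Function.Injective ⇑(algebraMap ℂ (V →L[ℂ] V) lam - T) := by
      obtain ⟨u, hu⟩ := hun
      intro a b hab
      have h2 : ((↑u⁻¹ : V →L[ℂ] V) * (algebraMap ℂ (V →L[ℂ] V) lam - T)) a =
          ((↑u⁻¹ : V →L[ℂ] V) * (algebraMap ℂ (V →L[ℂ] V) lam - T)) b := by
        simp only [ContinuousLinearMap.mul_apply]; rw [hab]
      rwa [← hu, Units.inv_mul, ContinuousLinearMap.one_apply,
        ContinuousLinearMap.one_apply] at h2
    have hz : (algebraMap ℂ (V →L[ℂ] V) lam - T) (w : V) = 0 := by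
      rw [ContinuousLinearMap.sub_apply, Algebra.algebraMap_eq_smul_one,
        ContinuousLinearMap.smul_apply, ContinuousLinearMap.one_apply, hTw, sub_self]
    exact hwne (hinj (by rw [hz, map_zero]))
  · have h1 : NormedSpace.exp T (w : V) = Complex.exp lam • (w : V) :=
      myExp_apply_eigen T lam w hTw
    have h2 : S (w : V) = 0 := w.2
    have h3 : NormedSpace.exp T (w : V) = μ • (w : V) := by
      simp only [hS, ContinuousLinearMap.sub_apply, Algebra.algebraMap_eq_smul_one,
        ContinuousLinearMap.smul_apply, ContinuousLinearMap.one_apply, sub_eq_zero] at h2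
      exact h2
    have : (μ - Complex.exp lam) • (w : V) = 0 := by
      rw [sub_smul, ← h1, ← h3, sub_self]
    rcases smul_eq_zero.mp this with h | h
    · exact sub_eq_zero.mp h
    · exact absurd h hwne

variable [Nontrivial V]

theorem myDecay (T : V →L[ℂ] V) (hT : ∀ lam ∈ spectrum ℂ T, lam.re < 0) :
    ∃ C > (0:ℝ), ∃ δ > (0:ℝ), ∀ s : ℝ, 0 ≤ s →
      ‖NormedSpace.exp (s • T)‖ ≤ C * Real.exp (-δ * s) := by
  letI : NormedAlgebra ℚ (V →L[ℂ] V) := NormedAlgebra.restrictScalars ℚ ℂ _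
  have hρ : spectralRadius ℂ (NormedSpace.exp T) < 1 := by
    have := spectrum.spectralRadius_lt_of_forall_lt (NormedSpace.exp T) (r := 1) ?_
    · simpa using this
    · intro z hz
      obtain ⟨lam, hlam, rfl⟩ := mySpectrum_exp T z hz
      have : ‖Complex.exp lam‖ < 1 := by
        rw [Complex.norm_exp, Real.exp_lt_one_iff]
        exact hT lam hlam
      exact_mod_cast this
  obtain ⟨k, hk1, hk⟩ : ∃ k : ℕ, 1 ≤ k ∧ ‖(NormedSpace.exp T) ^ k‖ < 1 := by
    have htd := spectrum.pow_norm_pow_one_div_tendsto_nhds_spectralRadius (NormedSpace.exp T)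
    have hev := htd.eventually_lt_const hρ
    obtain ⟨k, hklt, hkge⟩ := (hev.and (Filter.eventually_ge_atTop 1)).exists
    refine ⟨k, hkge, ?_⟩
    have hk' : ‖(NormedSpace.exp T) ^ k‖ ^ (1 / (k:ℝ)) < 1 := by
      rwa [show (1:ENNReal) = ENNReal.ofReal 1 by simp,
        ENNReal.ofReal_lt_ofReal_iff one_pos] at hklt
    by_contra hge
    push_neg at hge
    have : (1:ℝ) ≤ ‖(NormedSpace.exp T) ^ k‖ ^ (1 / (k:ℝ)) :=
      Real.one_le_rpow hge (by positivity)
    linarith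
  set a : ℝ := max ‖(NormedSpace.exp T) ^ k‖ (1/2) with ha
  have ha0 : 0 < a := lt_max_of_lt_right one_half_pos
  have ha1 : a < 1 := max_lt hk one_half_lt_one
  have hbound : ‖(NormedSpace.exp T) ^ k‖ ≤ a := le_max_left _ _
  have hlog : Real.log a < 0 := Real.log_neg ha0 ha1
  have hkpos : (0:ℝ) < k := by exact_mod_cast hk1
  refine ⟨Real.exp ((k:ℝ) * ‖T‖) / a, by positivity,
    -(Real.log a) / k, div_pos (neg_pos.mpr hlog) hkpos, ?_⟩
  intro s hs
  set m : ℕ := ⌊s / k⌋₊ with hm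
  have hmle : (m : ℝ) ≤ s / k := Nat.floor_le (by positivity)
  have hmlt : s / k < m + 1 := Nat.lt_floor_add_one _
  set r : ℝ := s - k * m with hr
  have hr0 : 0 ≤ r := by
    have : (m:ℝ) * k ≤ s := (le_div_iff₀ hkpos).mp hmle
    simp only [hr]
    nlinarith
  have hrk : r ≤ k := by
    have : s < (m + 1) * k := (div_lt_iff₀ hkpos).mp hmlt
    simp only [hr]
    nlinarith
  have hsplit : NormedSpace.exp (s • T) =
      NormedSpace.exp (r • T) * (NormedSpace.exp T ^ k) ^ m := by
    have h1 : s • T = r • T + ((k * m : ℕ) : ℝ) • T := by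
      rw [← add_smul]
      congr 1
      push_cast
      simp only [hr]; ring
    rw [h1, NormedSpace.exp_add_of_commute (Commute.refl T |>.smul_left r |>.smul_right _)]
    congr 1
    rw [show ((k * m : ℕ) : ℝ) • T = (k * m : ℕ) • T from Nat.cast_smul_eq_nsmul ℝ _ T,
      NormedSpace.exp_nsmul, pow_mul]
  rw [hsplit]
  calc ‖NormedSpace.exp (r • T) * (NormedSpace.exp T ^ k) ^ m‖
      ≤ ‖NormedSpace.exp (r • T)‖ * ‖(NormedSpace.exp T ^ k) ^ m‖ := norm_mul_le _ _
    _ ≤ Real.exp ((k:ℝ) * ‖T‖) * a ^ m := by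
        refine mul_le_mul ?_ ?_ (norm_nonneg _) (Real.exp_nonneg _)
        · refine (myNorm_exp_le (𝕂 := ℂ) _).trans ?_
          rw [Real.exp_le_exp]
          refine (_root_.norm_smul_le r T).trans ?_
          rw [Real.norm_of_nonneg hr0]
          exact mul_le_mul hrk le_rfl (norm_nonneg _) (by positivity)
        · exact (norm_pow_le _ m).trans (pow_le_pow_left₀ (norm_nonneg _) hbound m)
    _ ≤ Real.exp ((k:ℝ) * ‖T‖) * (Real.exp (Real.log a * (s/k - 1))) := by
        refine mul_le_mul le_rfl ?_ (by positivity) (Real.exp_nonneg _)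
        rw [show a ^ m = Real.exp (Real.log a * m) by
          rw [mul_comm, Real.exp_nat_mul, Real.exp_log ha0]]
        rw [Real.exp_le_exp]
        have : s / k - 1 ≤ (m : ℝ) := by linarith
        nlinarith [hlog, this]
    _ = Real.exp ((k:ℝ) * ‖T‖) / a * Real.exp (-(-(Real.log a) / k) * s) := by
        have hexp : Real.exp (Real.log a * (s / k - 1)) =
            Real.exp (-(-Real.log a / k) * s) / a := by
          have harith : -(-Real.log a / k) * s - Real.log a = Real.log a * (s / k - 1) := by
            field_simp
          rw [← harith, Real.exp_sub, Real.exp_log ha0]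
        rw [hexp]
        ring
end SpecAux

section TransferAux
variable {n : ℕ} {𝕜 : Type*} [RCLike 𝕜]

theorem myToEuclideanCLM_piLp_equiv_symm (A : Matrix (Fin n) (Fin n) 𝕜) (x : Fin n → 𝕜) :
    Matrix.toEuclideanCLM (n := Fin n) (𝕜 := 𝕜) A ((WithLp.equiv _ _).symm x) =
      (WithLp.equiv _ _).symm (Matrix.toLin' A x) := rfl

theorem myCLM_continuous : Continuous (⇑(Matrix.toEuclideanCLM (𝕜 := 𝕜) (n := Fin n))) := by
  let lm : Matrix (Fin n) (Fin n) 𝕜 →ₗ[𝕜]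
      (EuclideanSpace 𝕜 (Fin n) →L[𝕜] EuclideanSpace 𝕜 (Fin n)) :=
    { toFun := ⇑(Matrix.toEuclideanCLM (𝕜 := 𝕜) (n := Fin n))
      map_add' := fun x y => map_add _ x y
      map_smul' := fun c x => map_smul _ c x }
  exact lm.continuous_of_finiteDimensional

theorem myToCLM_exp (A : Matrix (Fin n) (Fin n) 𝕜) :
    Matrix.toEuclideanCLM (𝕜 := 𝕜) (NormedSpace.exp A) =
      NormedSpace.exp (Matrix.toEuclideanCLM (𝕜 := 𝕜) A) := by
  letI : SeminormedRing (Matrix (Fin n) (Fin n) 𝕜) := Matrix.linftyOpSemiNormedRing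
  letI : NormedRing (Matrix (Fin n) (Fin n) 𝕜) := Matrix.linftyOpNormedRing
  letI : NormedAlgebra 𝕜 (Matrix (Fin n) (Fin n) 𝕜) := Matrix.linftyOpNormedAlgebra
  letI : NormedAlgebra ℚ (Matrix (Fin n) (Fin n) 𝕜) := Matrix.linftyOpNormedAlgebra
  exact @NormedSpace.map_exp _ _ _ _ (FiniteDimensional.complete 𝕜 _) _ _ _ _ _ (Matrix.toEuclideanCLM (𝕜 := 𝕜) (n := Fin n)) myCLM_continuous A

theorem myMapC_exp (A : Matrix (Fin n) (Fin n) ℝ) :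
    (NormedSpace.exp A).map (Complex.ofReal : ℝ → ℂ) =
      NormedSpace.exp (A.map Complex.ofReal) := by
  letI : SeminormedRing (Matrix (Fin n) (Fin n) ℝ) := Matrix.linftyOpSemiNormedRing
  letI : NormedRing (Matrix (Fin n) (Fin n) ℝ) := Matrix.linftyOpNormedRing
  letI : NormedAlgebra ℝ (Matrix (Fin n) (Fin n) ℝ) := Matrix.linftyOpNormedAlgebra
  letI : NormedAlgebra ℚ (Matrix (Fin n) (Fin n) ℝ) := Matrix.linftyOpNormedAlgebra
  letI : CompleteSpace (Matrix (Fin n) (Fin n) ℝ) := FiniteDimensional.complete ℝ _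
  letI : SeminormedRing (Matrix (Fin n) (Fin n) ℂ) := Matrix.linftyOpSemiNormedRing
  letI : NormedRing (Matrix (Fin n) (Fin n) ℂ) := Matrix.linftyOpNormedRing
  letI : NormedAlgebra ℝ (Matrix (Fin n) (Fin n) ℂ) := Matrix.linftyOpNormedAlgebra
  have hcont : Continuous (⇑((Complex.ofRealHom : ℝ →+* ℂ).mapMatrix :
      Matrix (Fin n) (Fin n) ℝ →+* Matrix (Fin n) (Fin n) ℂ)) := by
    have : ⇑((Complex.ofRealHom : ℝ →+* ℂ).mapMatrix :
        Matrix (Fin n) (Fin n) ℝ →+* Matrix (Fin n) (Fin n) ℂ) =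
        fun M : Matrix (Fin n) (Fin n) ℝ => M.map (Complex.ofReal : ℝ → ℂ) := by
      funext M; rfl
    rw [this]
    exact Continuous.matrix_map continuous_id Complex.continuous_ofReal
  have := NormedSpace.map_exp ((Complex.ofRealHom : ℝ →+* ℂ).mapMatrix :
      Matrix (Fin n) (Fin n) ℝ →+* Matrix (Fin n) (Fin n) ℂ) hcont A
  simp only [RingHom.mapMatrix_apply] at this
  exact this

theorem myNorm_map_ofReal (x : EuclideanSpace ℝ (Fin n)) :
    ‖(((WithLp.equiv 2 _).symm fun i => ((x i : ℝ) : ℂ)) : EuclideanSpace ℂ (Fin n))‖ = ‖x‖ := by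
  simp only [EuclideanSpace.norm_eq]
  congr 1
  refine Finset.sum_congr rfl fun i _ => ?_
  simp [Complex.norm_real]

theorem myMulVec_map (M : Matrix (Fin n) (Fin n) ℝ) (x : Fin n → ℝ) :
    (M.map (Complex.ofReal : ℝ → ℂ)).mulVec (fun i => ((x i : ℝ) : ℂ)) =
      fun i => ((M.mulVec x i : ℝ) : ℂ) := by
  funext i
  simp only [Matrix.mulVec, dotProduct, Matrix.map_apply]
  push_cast
  rfl

theorem myRealCLMnorm_le (M : Matrix (Fin n) (Fin n) ℝ) :
    ‖Matrix.toEuclideanCLM (𝕜 := ℝ) M‖ ≤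
      ‖Matrix.toEuclideanCLM (𝕜 := ℂ) (M.map (Complex.ofReal : ℝ → ℂ))‖ := by
  refine ContinuousLinearMap.opNorm_le_bound _ (norm_nonneg _) fun x => ?_
  have hx : ‖Matrix.toEuclideanCLM (𝕜 := ℝ) M x‖ =
      ‖Matrix.toEuclideanCLM (𝕜 := ℂ) (M.map Complex.ofReal)
        ((WithLp.equiv 2 _).symm fun i => ((x i : ℝ) : ℂ))‖ := by
    rw [myToEuclideanCLM_piLp_equiv_symm]
    have hxx : Matrix.toEuclideanCLM (𝕜 := ℝ) M x =
        (WithLp.equiv 2 _).symm (Matrix.toLin' M (WithLp.equiv 2 _ x)) := by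
      have := Matrix.ofLp_toEuclideanCLM (𝕜 := ℝ) M x
      exact (WithLp.equiv 2 _).symm_apply_eq.mpr this
    rw [hxx]
    rw [show Matrix.toLin' (M.map Complex.ofReal) (fun i => ((x i : ℝ) : ℂ)) =
      (M.map (Complex.ofReal : ℝ → ℂ)).mulVec (fun i => ((x i : ℝ) : ℂ)) from rfl]
    rw [myMulVec_map]
    rw [show Matrix.toLin' M (WithLp.equiv 2 _ x) = M.mulVec (WithLp.equiv 2 _ x) from rfl]
    exact (myNorm_map_ofReal ((WithLp.equiv 2 _).symm (M.mulVec (WithLp.equiv 2 _ x)))).symm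
  rw [hx]
  refine (ContinuousLinearMap.le_opNorm _ _).trans ?_
  rw [myNorm_map_ofReal x]

theorem myAbs_coord_le (y : EuclideanSpace ℝ (Fin n)) (i : Fin n) : |y i| ≤ ‖y‖ := by
  rw [EuclideanSpace.norm_eq]
  refine le_trans ?_ (Real.sqrt_le_sqrt (Finset.single_le_sum
    (f := fun j => ‖y j‖ ^ 2) (fun j _ => by positivity) (Finset.mem_univ i)))
  rw [Real.sqrt_sq_eq_abs]
  simp [abs_abs, Real.norm_eq_abs]

theorem myEntry_le (A : Matrix (Fin n) (Fin n) ℝ) (i j : Fin n) :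
    |A i j| ≤ ‖Matrix.toEuclideanCLM (𝕜 := ℝ) A‖ := by
  have hz : (Matrix.toEuclideanCLM (𝕜 := ℝ) A (EuclideanSpace.single j (1:ℝ))) i = A i j := by
    rw [show EuclideanSpace.single j (1:ℝ) = (WithLp.equiv 2 _).symm (Pi.single j 1) from rfl,
      myToEuclideanCLM_piLp_equiv_symm]
    show (Matrix.toLin' A (Pi.single j 1)) i = A i j
    simp [Matrix.toLin'_apply, Matrix.mulVec_single]
  calc |A i j| = |(Matrix.toEuclideanCLM (𝕜 := ℝ) A (EuclideanSpace.single j (1:ℝ))) i| := by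
        rw [hz]
    _ ≤ ‖Matrix.toEuclideanCLM (𝕜 := ℝ) A (EuclideanSpace.single j (1:ℝ))‖ :=
        myAbs_coord_le _ i
    _ ≤ ‖Matrix.toEuclideanCLM (𝕜 := ℝ) A‖ * ‖EuclideanSpace.single j (1:ℝ)‖ :=
        ContinuousLinearMap.le_opNorm _ _
    _ = ‖Matrix.toEuclideanCLM (𝕜 := ℝ) A‖ := by
        rw [EuclideanSpace.norm_single]
        simp

theorem myCLMnorm_transpose (A : Matrix (Fin n) (Fin n) ℝ) :
    ‖Matrix.toEuclideanCLM (𝕜 := ℝ) Aᵀ‖ = ‖Matrix.toEuclideanCLM (𝕜 := ℝ) A‖ := by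
  have h : Aᵀ = star A := by
    ext i j; simp [Matrix.star_eq_conjTranspose, Matrix.conjTranspose_apply]
  rw [h, map_star, ContinuousLinearMap.star_eq_adjoint]
  exact LinearIsometryEquiv.norm_map ContinuousLinearMap.adjoint _

theorem myRealSmulC {M : Type*} [AddCommGroup M] [Module ℂ M] [Module ℝ M]
    [IsScalarTower ℝ ℂ M] (s : ℝ) (m : M) : s • m = ((s:ℂ)) • m := by
  rw [← smul_one_smul ℂ s m]
  congr 1
  rw [Complex.real_smul, mul_one]
end TransferAux

section DecayAux
variable {n : ℕ}

theorem myExpDecayR (hn : 1 ≤ n) (B : Matrix (Fin n) (Fin n) ℝ) (hB : SpecNeg B) :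
    ∃ C > (0:ℝ), ∃ δ > (0:ℝ), ∀ s : ℝ, 0 ≤ s →
      ‖Matrix.toEuclideanCLM (𝕜 := ℝ) (mExp (s • B))‖ ≤ C * Real.exp (-δ * s) := by
  haveI : Nonempty (Fin n) := Fin.pos_iff_nonempty.mp hn
  set Tc := Matrix.toEuclideanCLM (𝕜 := ℂ) (B.map Complex.ofReal) with hTc
  have hspec : ∀ lam ∈ spectrum ℂ Tc, lam.re < 0 := by
    intro lam hlam
    rw [hTc, AlgEquiv.spectrum_eq] at hlam
    exact hB lam hlam
  obtain ⟨C, hC, δ, hδ, hdec⟩ := myDecay Tc hspec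
  refine ⟨C, hC, δ, hδ, fun s hs => ?_⟩
  refine le_trans (myRealCLMnorm_le _) ?_
  have hsmul : ((s • B).map (Complex.ofReal : ℝ → ℂ)) = s • (B.map Complex.ofReal) := by
    ext i j
    simp [Matrix.map_apply, Matrix.smul_apply, Complex.real_smul]
  have hkey : Matrix.toEuclideanCLM (𝕜 := ℂ) ((mExp (s • B)).map (Complex.ofReal : ℝ → ℂ)) =
      NormedSpace.exp (s • Tc) := by
    rw [show mExp (s • B) = NormedSpace.exp (s • B) from rfl, myMapC_exp, hsmul,
      myRealSmulC s (B.map Complex.ofReal), myToCLM_exp, _root_.map_smul,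
      ← myRealSmulC s (Matrix.toEuclideanCLM (𝕜 := ℂ) (B.map Complex.ofReal))]
  rw [hkey]
  exact hdec s hs

theorem myQinfIsUnit (hn : 1 ≤ n) (Q B : Matrix (Fin n) (Fin n) ℝ)
    (hQ : Q.PosDef) (hB : SpecNeg B) : IsUnit (Qinf Q B) := by
  haveI : Nonempty (Fin n) := Fin.pos_iff_nonempty.mp hn
  obtain ⟨C, hC, δ, hδ, hdec⟩ := myExpDecayR hn B hB
  set F : ℝ → Matrix (Fin n) (Fin n) ℝ := fun s => mExp (s • B) * Q * (mExp (s • B))ᵀ with hF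
  set K : ℝ := C * ‖Matrix.toEuclideanCLM (𝕜 := ℝ) Q‖ * C with hKdef
  have hcontM : Continuous fun s : ℝ => mExp (s • B) := by
    letI : SeminormedRing (Matrix (Fin n) (Fin n) ℝ) := Matrix.linftyOpSemiNormedRing
    letI : NormedRing (Matrix (Fin n) (Fin n) ℝ) := Matrix.linftyOpNormedRing
    letI : NormedAlgebra ℝ (Matrix (Fin n) (Fin n) ℝ) := Matrix.linftyOpNormedAlgebra
    letI : NormedAlgebra ℚ (Matrix (Fin n) (Fin n) ℝ) := Matrix.linftyOpNormedAlgebra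
    letI : CompleteSpace (Matrix (Fin n) (Fin n) ℝ) := FiniteDimensional.complete ℝ _
    exact NormedSpace.exp_continuous.comp (continuous_id.smul continuous_const)
  have hFcont : ∀ i j, Continuous fun s => F s i j := by
    intro i j
    exact Continuous.matrix_elem
      ((hcontM.matrix_mul continuous_const).matrix_mul hcontM.matrix_transpose) i j
  have hFbound : ∀ (i j : Fin n), ∀ s : ℝ, 0 ≤ s →
      |F s i j| ≤ K * Real.exp (-(2*δ) * s) := by
    intro i j s hs
    refine (myEntry_le _ i j).trans ?_
    rw [hF]
    simp only
    rw [_root_.map_mul, _root_.map_mul]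
    have hE := hdec s hs
    calc ‖Matrix.toEuclideanCLM (𝕜 := ℝ) (mExp (s • B)) * Matrix.toEuclideanCLM (𝕜 := ℝ) Q *
        Matrix.toEuclideanCLM (𝕜 := ℝ) (mExp (s • B))ᵀ‖
        ≤ ‖Matrix.toEuclideanCLM (𝕜 := ℝ) (mExp (s • B)) * Matrix.toEuclideanCLM (𝕜 := ℝ) Q‖ *
          ‖Matrix.toEuclideanCLM (𝕜 := ℝ) (mExp (s • B))ᵀ‖ := norm_mul_le _ _
      _ ≤ (‖Matrix.toEuclideanCLM (𝕜 := ℝ) (mExp (s • B))‖ *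
            ‖Matrix.toEuclideanCLM (𝕜 := ℝ) Q‖) *
          ‖Matrix.toEuclideanCLM (𝕜 := ℝ) (mExp (s • B))ᵀ‖ :=
          mul_le_mul_of_nonneg_right (norm_mul_le _ _) (norm_nonneg _)
      _ = ‖Matrix.toEuclideanCLM (𝕜 := ℝ) (mExp (s • B))‖ *
            ‖Matrix.toEuclideanCLM (𝕜 := ℝ) Q‖ *
            ‖Matrix.toEuclideanCLM (𝕜 := ℝ) (mExp (s • B))‖ := by
          rw [myCLMnorm_transpose]
      _ ≤ (C * Real.exp (-δ * s)) * ‖Matrix.toEuclideanCLM (𝕜 := ℝ) Q‖ *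
            (C * Real.exp (-δ * s)) := by
          have h1 : (0:ℝ) ≤ C * Real.exp (-δ * s) := by positivity
          have hnn : (0:ℝ) ≤ ‖Matrix.toEuclideanCLM (𝕜 := ℝ) Q‖ := norm_nonneg _
          have hE' := hE
          nlinarith [norm_nonneg (Matrix.toEuclideanCLM (𝕜 := ℝ) (mExp (s • B))),
            mul_le_mul_of_nonneg_right hE hnn]
      _ = K * Real.exp (-(2*δ) * s) := by
          rw [hKdef, show -(2*δ) * s = (-δ * s) + (-δ * s) by ring, Real.exp_add]
          ring
  have hInt : ∀ i j, MeasureTheory.IntegrableOn (fun s => F s i j) (Set.Ioi (0:ℝ)) := by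
    intro i j
    refine MeasureTheory.Integrable.mono'
      ((exp_neg_integrableOn_Ioi 0 (by positivity : (0:ℝ) < 2*δ)).const_mul K)
      ((hFcont i j).aestronglyMeasurable) ?_
    filter_upwards [MeasureTheory.ae_restrict_mem measurableSet_Ioi] with s hs
    rw [Real.norm_eq_abs]
    exact hFbound i j s (le_of_lt hs)
  have hQinfEntry : ∀ i j, (Qinf Q B) i j = ∫ s in Set.Ioi (0:ℝ), F s i j := fun i j => rfl
  have hq : ∀ x : Fin n → ℝ, x ≠ 0 → 0 < x ⬝ᵥ (Qinf Q B).mulVec x := by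
    intro x hx
    have hqs : ∀ s : ℝ, 0 < x ⬝ᵥ (F s).mulVec x := by
      intro s
      have hEunit : IsUnit (mExp (s • B)) := Matrix.isUnit_exp _
      have hy : x ᵥ* mExp (s • B) ≠ 0 := by
        intro h0
        have hinj : Function.Injective (mExp (s • B)).vecMul :=
          Matrix.vecMul_injective_iff_isUnit.mpr hEunit
        apply hx
        apply hinj
        show x ᵥ* mExp (s • B) = 0 ᵥ* mExp (s • B)
        rw [h0, Matrix.zero_vecMul]
      have hpos := hQ.dotProduct_mulVec_pos hy
      have hform : x ⬝ᵥ (F s).mulVec x =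
          (x ᵥ* mExp (s • B)) ⬝ᵥ Q.mulVec (x ᵥ* mExp (s • B)) := by
        rw [hF]
        simp only
        rw [← Matrix.mulVec_mulVec, ← Matrix.mulVec_mulVec, Matrix.dotProduct_mulVec,
          Matrix.mulVec_transpose]
      rw [hform]
      simpa using hpos
    have hsum : ∀ s : ℝ, x ⬝ᵥ (F s).mulVec x = ∑ i, ∑ j, x i * (F s i j * x j) := by
      intro s
      simp [dotProduct, Matrix.mulVec, Finset.mul_sum]
    have hIq : MeasureTheory.IntegrableOn (fun s => x ⬝ᵥ (F s).mulVec x) (Set.Ioi (0:ℝ)) := by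
      rw [show (fun s => x ⬝ᵥ (F s).mulVec x) =
        fun s => ∑ i, ∑ j, x i * (F s i j * x j) from funext hsum]
      refine MeasureTheory.integrable_finset_sum _ fun i _ => ?_
      refine MeasureTheory.integrable_finset_sum _ fun j _ => ?_
      exact (((hInt i j).mul_const (x j)).const_mul (x i))
    have hform2 : x ⬝ᵥ (Qinf Q B).mulVec x =
        ∫ s in Set.Ioi (0:ℝ), x ⬝ᵥ (F s).mulVec x := by
      have h1 : x ⬝ᵥ (Qinf Q B).mulVec x = ∑ i, ∑ j, x i * ((Qinf Q B) i j * x j) := by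
        simp [dotProduct, Matrix.mulVec, Finset.mul_sum]
      rw [h1]
      rw [show (fun s => x ⬝ᵥ (F s).mulVec x) =
        fun s => ∑ i, ∑ j, x i * (F s i j * x j) from funext hsum]
      rw [MeasureTheory.integral_finset_sum _ fun i _ =>
        MeasureTheory.integrable_finset_sum _ fun j _ =>
          (((hInt i j).mul_const (x j)).const_mul (x i))]
      refine Finset.sum_congr rfl fun i _ => ?_
      rw [MeasureTheory.integral_finset_sum _ fun j _ =>
        (((hInt i j).mul_const (x j)).const_mul (x i))]
      refine Finset.sum_congr rfl fun j _ => ?_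
      rw [hQinfEntry i j, MeasureTheory.integral_const_mul, MeasureTheory.integral_mul_const]
    rw [hform2]
    rw [MeasureTheory.setIntegral_pos_iff_support_of_nonneg_ae ?_ hIq]
    · have hsupp : Function.support (fun s => x ⬝ᵥ (F s).mulVec x) = Set.univ := by
        ext s
        simp [Function.mem_support, ne_of_gt (hqs s)]
      rw [hsupp, Set.univ_inter, Real.volume_Ioi]
      simp
    · filter_upwards with s
      exact le_of_lt (hqs s)
  rw [← Matrix.mulVec_injective_iff_isUnit]
  intro a b hab
  by_contra hne
  have hsub : (Qinf Q B).mulVec (a - b) = 0 := by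
    rw [Matrix.mulVec_sub, hab, sub_self]
  have hpos := hq (a - b) (sub_ne_zero.mpr hne)
  rw [hsub, dotProduct_zero] at hpos
  exact lt_irrefl 0 hpos
end DecayAux

end AuxStmt17
-- ===================== end auxiliary lemmas =====================

/-- For `(x,u)` in the global region `G` and `0 < t ≤ 1`,
`c(1+|x|)^{-2} ≤ t²|x|² + |u − D_t x|²`. -/
theorem stmt17 (n : ℕ) (hn : 1 ≤ n) (Q B : Matrix (Fin n) (Fin n) ℝ)
    (hQ : Q.PosDef) (hB : SpecNeg B) :
    ∃ c : ℝ, 0 < c ∧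
      ∀ x u : Vec n, 1 / (1 + ‖x‖) < ‖x - u‖ →
        ∀ t : ℝ, 0 < t → t ≤ 1 →
          c / (1 + ‖x‖) ^ 2 ≤ t ^ 2 * ‖x‖ ^ 2 + ‖u - app (Dm Q B t) x‖ ^ 2 := by
  classical
  haveI : Nonempty (Fin n) := Fin.pos_iff_nonempty.mp hn
  have hUnit := myQinfIsUnit hn Q B hQ hB
  have hdet : IsUnit (Qinf Q B).det := (Matrix.isUnit_iff_isUnit_det _).mp hUnit
  have hMM : Qinf Q B * (Qinf Q B)⁻¹ = 1 := Matrix.mul_nonsing_inv _ hdet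
  set nB : ℝ := ‖Matrix.toEuclideanCLM (𝕜 := ℝ) Bᵀ‖ with hnB
  set K : ℝ := ‖Matrix.toEuclideanCLM (𝕜 := ℝ) (Qinf Q B)‖ * (nB * Real.exp nB) *
      ‖Matrix.toEuclideanCLM (𝕜 := ℝ) (Qinf Q B)⁻¹‖ with hKdef
  have hK0 : 0 ≤ K := by positivity
  set K' : ℝ := max K 1 with hK'def
  have hK'1 : (1:ℝ) ≤ K' := le_max_right _ _
  have hK'0 : (0:ℝ) < K' := lt_of_lt_of_le one_pos hK'1
  refine ⟨1 / (4 * K' ^ 2), by positivity, ?_⟩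
  intro x u hxu t ht ht1
  have hx1 : (0:ℝ) < 1 + ‖x‖ := by positivity
  -- the Lipschitz-type bound on ‖x - D_t x‖
  have hlip : ‖x - app (Dm Q B t) x‖ ≤ K * (t * ‖x‖) := by
    have hmat : (1 : Matrix (Fin n) (Fin n) ℝ) - Dm Q B t =
        Qinf Q B * ((1 : Matrix (Fin n) (Fin n) ℝ) - mExp ((-t) • Bᵀ)) * (Qinf Q B)⁻¹ := by
      rw [Matrix.mul_sub, Matrix.mul_one, Matrix.sub_mul, hMM]
      rfl
    have happ0 : x - app (Dm Q B t) x =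
        Matrix.toEuclideanCLM (𝕜 := ℝ)
          ((1 : Matrix (Fin n) (Fin n) ℝ) - Dm Q B t) x := by
      rw [_root_.map_sub, _root_.map_one]
      rfl
    have hSnorm : ‖Matrix.toEuclideanCLM (𝕜 := ℝ)
        ((1 : Matrix (Fin n) (Fin n) ℝ) - mExp ((-t) • Bᵀ))‖ ≤ t * (nB * Real.exp nB) := by
      have hmapS : Matrix.toEuclideanCLM (𝕜 := ℝ)
          ((1 : Matrix (Fin n) (Fin n) ℝ) - mExp ((-t) • Bᵀ)) =
          1 - NormedSpace.exp ((-t) • Matrix.toEuclideanCLM (𝕜 := ℝ) Bᵀ) := by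
        rw [_root_.map_sub, _root_.map_one,
          show mExp ((-t) • Bᵀ) = NormedSpace.exp ((-t) • Bᵀ) from rfl,
          myToCLM_exp, _root_.map_smul]
      rw [hmapS]
      have hcnorm : ‖(-t) • Matrix.toEuclideanCLM (𝕜 := ℝ) Bᵀ‖ = t * nB := by
        have h0 := _root_.norm_smul (-t) (Matrix.toEuclideanCLM (𝕜 := ℝ) Bᵀ)
        rw [h0, Real.norm_eq_abs, abs_neg, abs_of_pos ht, ← hnB]
      have h1 := myNorm_exp_sub_one_le ((-t) • Matrix.toEuclideanCLM (𝕜 := ℝ) Bᵀ)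
      rw [norm_sub_rev] at h1
      refine h1.trans ?_
      rw [hcnorm]
      have htB : t * nB ≤ nB := by
        have hnB0 : 0 ≤ nB := norm_nonneg _
        nlinarith
      have := Real.exp_le_exp.mpr htB
      have hnB0 : 0 ≤ nB := norm_nonneg _
      nlinarith [Real.exp_pos (t * nB), mul_nonneg (le_of_lt ht) hnB0]
    rw [happ0, hmat, _root_.map_mul, _root_.map_mul]
    calc ‖(Matrix.toEuclideanCLM (𝕜 := ℝ) (Qinf Q B) *
          Matrix.toEuclideanCLM (𝕜 := ℝ) ((1 : Matrix (Fin n) (Fin n) ℝ) - mExp ((-t) • Bᵀ)) *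
          Matrix.toEuclideanCLM (𝕜 := ℝ) (Qinf Q B)⁻¹) x‖
        ≤ ‖Matrix.toEuclideanCLM (𝕜 := ℝ) (Qinf Q B) *
          Matrix.toEuclideanCLM (𝕜 := ℝ) ((1 : Matrix (Fin n) (Fin n) ℝ) - mExp ((-t) • Bᵀ)) *
          Matrix.toEuclideanCLM (𝕜 := ℝ) (Qinf Q B)⁻¹‖ * ‖x‖ :=
          ContinuousLinearMap.le_opNorm _ _
      _ ≤ (‖Matrix.toEuclideanCLM (𝕜 := ℝ) (Qinf Q B)‖ *
          ‖Matrix.toEuclideanCLM (𝕜 := ℝ) ((1 : Matrix (Fin n) (Fin n) ℝ) - mExp ((-t) • Bᵀ))‖ *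
          ‖Matrix.toEuclideanCLM (𝕜 := ℝ) (Qinf Q B)⁻¹‖) * ‖x‖ := by
          refine mul_le_mul_of_nonneg_right ?_ (norm_nonneg _)
          refine (norm_mul_le _ _).trans ?_
          exact mul_le_mul_of_nonneg_right (norm_mul_le _ _) (norm_nonneg _)
      _ ≤ (‖Matrix.toEuclideanCLM (𝕜 := ℝ) (Qinf Q B)‖ * (t * (nB * Real.exp nB)) *
          ‖Matrix.toEuclideanCLM (𝕜 := ℝ) (Qinf Q B)⁻¹‖) * ‖x‖ := by
          refine mul_le_mul_of_nonneg_right ?_ (norm_nonneg _)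
          refine mul_le_mul_of_nonneg_right ?_ (norm_nonneg _)
          exact mul_le_mul_of_nonneg_left hSnorm (norm_nonneg _)
      _ = K * (t * ‖x‖) := by rw [hKdef]; ring
  have hlip' : ‖x - app (Dm Q B t) x‖ ≤ K' * (t * ‖x‖) := by
    refine hlip.trans ?_
    have : 0 ≤ t * ‖x‖ := mul_nonneg (le_of_lt ht) (norm_nonneg _)
    exact mul_le_mul_of_nonneg_right (le_max_left _ _) this
  -- arithmetic split
  have hgoal : (1 / (4 * K' ^ 2)) / (1 + ‖x‖) ^ 2 =
      (1 / (1 + ‖x‖)) ^ 2 / (4 * K' ^ 2) := by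
    have h1 : (1 + ‖x‖) ≠ 0 := ne_of_gt hx1
    have h2 : K' ≠ 0 := ne_of_gt hK'0
    field_simp
  rw [hgoal]
  set ε : ℝ := 1 / (1 + ‖x‖) with hεdef
  have hε : 0 < ε := by positivity
  by_cases hcase : ε / 2 ≤ K' * (t * ‖x‖)
  · have h2 : ε ^ 2 / (4 * K' ^ 2) ≤ t ^ 2 * ‖x‖ ^ 2 := by
      rw [div_le_iff₀ (by positivity)]
      nlinarith [hcase, hε, hK'0, mul_nonneg (le_of_lt ht) (norm_nonneg x)]
    have h6 : 0 ≤ ‖u - app (Dm Q B t) x‖ ^ 2 := sq_nonneg _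
    linarith
  · push_neg at hcase
    have htri : ‖x - u‖ ≤ ‖u - app (Dm Q B t) x‖ + ‖x - app (Dm Q B t) x‖ := by
      have hid : x - u = (x - app (Dm Q B t) x) - (u - app (Dm Q B t) x) := by abel
      rw [hid]
      refine (norm_sub_le _ _).trans ?_
      rw [add_comm]
    have h3 : ε / 2 ≤ ‖u - app (Dm Q B t) x‖ := by linarith
    have h4 : ε ^ 2 / 4 ≤ ‖u - app (Dm Q B t) x‖ ^ 2 := by nlinarith
    have h5 : ε ^ 2 / (4 * K' ^ 2) ≤ ε ^ 2 / 4 := by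
      apply div_le_div_of_nonneg_left (by positivity) (by positivity)
      nlinarith
    have h6 : 0 ≤ t ^ 2 * ‖x‖ ^ 2 := by positivity
    linarith

end
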